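/- Let X be a finite alphabet, n ≥ 1, and for x ∈ X^n let Ĥ_x be the empirical entropy of x. Define the universal guessing distribution P̃_n(x) = 2^{−nĤ_x} / ∑_{x'∈X^n} 2^{−nĤ_{x'}}. Then for every x ∈ X^n: (n+1)^{−(|X|−1)} · 2^{−nĤ_x} ≤ P̃_n(x) ≤ 2^{−nĤ_x}. -/
import Mathlib

set_option linter.unusedSectionVars false
set_option linter.unusedVariables false
set_option maxHeartbeats 1000000


open Finset

variable {X : Type*} [Fintype X] [DecidableEq X]

/-- Number of occurrences of the symbol `a` in the string `x ∈ X^n`. -/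
def occ {n : ℕ} (x : Fin n → X) (a : X) : ℕ :=
  (Finset.univ.filter fun i => x i = a).card

lemma sum_occ {n : ℕ} (x : Fin n → X) : ∑ a, occ x a = n := by
  classical
  have := Finset.card_eq_sum_card_fiberwise (f := x) (s := Finset.univ) (t := Finset.univ)
    (fun i _ => Finset.mem_univ (x i))
  simpa [occ, Finset.card_univ] using this.symm

lemma occ_le {n : ℕ} (x : Fin n → X) (a : X) : occ x a ≤ n := by
  simpa [occ] using (Finset.card_filter_le Finset.univ fun i => x i = a)

lemma prod_comp_occ {n : ℕ} (x : Fin n → X) (f : X → ℝ) :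
    ∏ i, f (x i) = ∏ a, f a ^ occ x a := by
  classical
  rw [← Finset.prod_fiberwise_of_maps_to (g := x) (t := Finset.univ)
    (fun i _ => Finset.mem_univ (x i)) (fun i => f (x i))]
  refine Finset.prod_congr rfl fun a _ => ?_
  rw [show (Finset.univ.filter fun i => x i = a).prod (fun i => f (x i))
      = (Finset.univ.filter fun i => x i = a).prod (fun _ => f a) from
    Finset.prod_congr rfl fun i hi => by rw [(Finset.mem_filter.1 hi).2]]
  simp [occ]

/-- Empirical entropy (base 2) of the string `x ∈ X^n`, with `0 log 0 = 0`. -/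
noncomputable def empEnt {n : ℕ} (x : Fin n → X) : ℝ :=
  -∑ a : X, ((occ x a : ℝ) / n) * Real.logb 2 ((occ x a : ℝ) / n)

lemma two_rpow_ident {n : ℕ} (hn : 1 ≤ n) (x : Fin n → X) :
    (2 : ℝ) ^ (-(n : ℝ) * empEnt x) = ∏ a, ((occ x a : ℝ) / n) ^ (occ x a) := by
  have hn0 : (n : ℝ) ≠ 0 := Nat.cast_ne_zero.2 (by omega)
  have h1 : -(n : ℝ) * empEnt x
      = ∑ a, (occ x a : ℝ) * Real.logb 2 ((occ x a : ℝ) / n) := by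
    rw [empEnt, neg_mul_neg, Finset.mul_sum]
    refine Finset.sum_congr rfl fun a _ => ?_
    field_simp
  rw [h1, Real.rpow_sum_of_pos (by norm_num)]
  refine Finset.prod_congr rfl fun a _ => ?_
  rcases Nat.eq_zero_or_pos (occ x a) with h | h
  · simp [h]
  · have hp : (0 : ℝ) < (occ x a : ℝ) / n := by positivity
    rw [mul_comm, Real.rpow_mul (by norm_num), Real.rpow_logb (by norm_num) (by norm_num) hp,
      Real.rpow_natCast]

lemma sum_p_eq_one {n : ℕ} (hn : 1 ≤ n) (x : Fin n → X) :
    ∑ a, ((occ x a : ℝ) / n) = 1 := by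
  have hn0 : (n : ℝ) ≠ 0 := Nat.cast_ne_zero.2 (by omega)
  rw [← Finset.sum_div]
  rw [show ∑ a, ((occ x a : ℝ)) = ((∑ a, occ x a : ℕ) : ℝ) by push_cast; ring, sum_occ]
  field_simp

lemma gibbs [Nonempty X] {n : ℕ} (hn : 1 ≤ n) (x : Fin n → X) :
    ((Fintype.card X : ℝ))⁻¹ ^ n ≤ ∏ a, ((occ x a : ℝ) / n) ^ (occ x a) := by
  classical
  set p : X → ℝ := fun a => (occ x a : ℝ) / n with hp
  have hp0 : ∀ a, 0 ≤ p a := fun a => by positivity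
  have hps : ∑ a, p a = 1 := sum_p_eq_one hn x
  set G : ℝ := ∏ a, p a ^ (p a) with hG
  have hGpos : 0 < G := by
    refine Finset.prod_pos fun a _ => ?_
    rcases eq_or_lt_of_le (hp0 a) with h | h
    · rw [← h, Real.rpow_zero]; norm_num
    · exact Real.rpow_pos_of_pos h _
  -- AM-GM : G⁻¹ ≤ card X
  have key : G⁻¹ ≤ (Fintype.card X : ℝ) := by
    set z : X → ℝ := fun a => if p a = 0 then 0 else (p a)⁻¹ with hz
    have h1 : ∏ a, z a ^ p a ≤ ∑ a, p a * z a :=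
      Real.geom_mean_le_arith_mean_weighted _ _ _ (fun a _ => hp0 a) hps
        (fun a _ => by by_cases h : p a = 0 <;> simp [hz, h, inv_nonneg, hp0 a])
    have h2 : ∏ a, z a ^ p a = G⁻¹ := by
      rw [hG, ← Finset.prod_inv_distrib]
      refine Finset.prod_congr rfl fun a _ => ?_
      by_cases h : p a = 0
      · simp [hz, h]
      · rw [hz]; simp only [h, if_false]
        rw [← Real.rpow_neg_one, ← Real.rpow_mul (hp0 a), ← Real.rpow_neg (hp0 a)]
        norm_num
    have h3 : ∑ a, p a * z a ≤ (Fintype.card X : ℝ) := by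
      calc ∑ a, p a * z a ≤ ∑ a : X, (1 : ℝ) := by
            refine Finset.sum_le_sum fun a _ => ?_
            by_cases h : p a = 0
            · simp [hz, h]
            · rw [hz]; simp only [h, if_false]
              rw [mul_inv_cancel₀ h]
        _ = (Fintype.card X : ℝ) := by simp
    calc G⁻¹ = ∏ a, z a ^ p a := h2.symm
      _ ≤ ∑ a, p a * z a := h1
      _ ≤ _ := h3
  have hinv : ((Fintype.card X : ℝ))⁻¹ ≤ G := by
    have hk : (0:ℝ) < (Fintype.card X : ℝ) := by
      have : 0 < Fintype.card X := Fintype.card_pos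
      exact_mod_cast this
    rw [inv_le_iff_one_le_mul₀ hk, mul_comm]
    have h4 := mul_le_mul_of_nonneg_right key hGpos.le
    rwa [inv_mul_cancel₀ hGpos.ne'] at h4
  have hGn : G ^ n = ∏ a, p a ^ (occ x a) := by
    rw [hG, ← Finset.prod_pow]
    refine Finset.prod_congr rfl fun a _ => ?_
    rw [← Real.rpow_natCast (p a ^ p a) n, ← Real.rpow_mul (hp0 a)]
    have : p a * n = (occ x a : ℝ) := by
      rw [hp]; field_simp
    rw [this, Real.rpow_natCast]
  calc ((Fintype.card X : ℝ))⁻¹ ^ n ≤ G ^ n :=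
        pow_le_pow_left₀ (by positivity) hinv n
    _ = _ := hGn

lemma card_types_le [Nonempty X] (n : ℕ) :
    (Finset.univ.image (fun x : Fin n → X => occ x)).card
      ≤ (n + 1) ^ (Fintype.card X - 1) := by
  classical
  obtain ⟨a₀⟩ := ‹Nonempty X›
  set F : (X → ℕ) → ({a : X // a ≠ a₀} → Fin (n + 1)) :=
    fun N a => ⟨min (N a.1) n, by omega⟩ with hF
  have hinj : Set.InjOn F (Finset.univ.image (fun x : Fin n → X => occ x)) := by
    intro N hN N' hN' hEq
    obtain ⟨y, _, rfl⟩ := Finset.mem_image.1 hN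
    obtain ⟨y', _, rfl⟩ := Finset.mem_image.1 hN'
    have hag : ∀ a : X, a ≠ a₀ → occ y a = occ y' a := by
      intro a ha
      have := congrFun hEq ⟨a, ha⟩
      have h1 : min (occ y a) n = min (occ y' a) n := by
        simpa [hF] using congrArg Fin.val this
      rwa [min_eq_left (occ_le y a), min_eq_left (occ_le y' a)] at h1
    have hsum : ∑ a, occ y a = ∑ a, occ y' a := by rw [sum_occ, sum_occ]
    have h0 : occ y a₀ = occ y' a₀ := by
      rw [← Finset.add_sum_erase _ _ (Finset.mem_univ a₀),
        ← Finset.add_sum_erase _ _ (Finset.mem_univ a₀)] at hsum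
      have : ∑ a ∈ Finset.univ.erase a₀, occ y a
          = ∑ a ∈ Finset.univ.erase a₀, occ y' a :=
        Finset.sum_congr rfl fun a ha => hag a (Finset.mem_erase.1 ha).1
      omega
    funext a
    by_cases h : a = a₀
    · rw [h]; exact h0
    · exact hag a h
  calc (Finset.univ.image (fun x : Fin n → X => occ x)).card
      ≤ (Finset.univ : Finset ({a : X // a ≠ a₀} → Fin (n + 1))).card :=
        Finset.card_le_card_of_injOn F (fun _ _ => Finset.mem_univ _) hinj
    _ = (n + 1) ^ (Fintype.card X - 1) := by
        rw [Finset.card_univ, Fintype.card_fun, Fintype.card_fin]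
        congr 1
        have : Fintype.card {a : X // a ≠ a₀} = Fintype.card X - Fintype.card {a : X // a = a₀} :=
          Fintype.card_subtype_compl _
        rw [this, Fintype.card_subtype_eq]

lemma type_sum_le_one {n : ℕ} (hn : 1 ≤ n) (N : X → ℕ) (hN : ∑ a, N a = n) :
    ∑ x' ∈ Finset.univ.filter (fun x' : Fin n → X => occ x' = N),
      ∏ a, ((N a : ℝ) / n) ^ (N a) ≤ 1 := by
  classical
  have hn0 : (n : ℝ) ≠ 0 := Nat.cast_ne_zero.2 (by omega)
  set f : X → ℝ := fun a => (N a : ℝ) / n with hf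
  have hterm : ∀ x' ∈ Finset.univ.filter (fun x' : Fin n → X => occ x' = N),
      ∏ a, ((N a : ℝ) / n) ^ (N a) = ∏ i, f (x' i) := by
    intro x' hx'
    have hocc : occ x' = N := (Finset.mem_filter.1 hx').2
    rw [prod_comp_occ x' f, hocc]
  rw [Finset.sum_congr rfl hterm]
  have hle : ∑ x' ∈ Finset.univ.filter (fun x' : Fin n → X => occ x' = N), ∏ i, f (x' i)
      ≤ ∑ x' : Fin n → X, ∏ i, f (x' i) := by
    refine Finset.sum_le_sum_of_subset_of_nonneg (Finset.filter_subset _ _) ?_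
    intro x' _ _
    exact Finset.prod_nonneg fun i _ => by positivity
  refine hle.trans ?_
  have : ∑ x' : Fin n → X, ∏ i, f (x' i) = ∏ i : Fin n, ∑ a, f a := by
    rw [Finset.prod_univ_sum (t := fun _ : Fin n => (Finset.univ : Finset X))
      (f := fun _ a => f a), Fintype.piFinset_univ]
  rw [this]
  have hsum1 : ∑ a, f a = 1 := by
    rw [hf, ← Finset.sum_div]
    rw [show ∑ a, ((N a : ℝ)) = ((∑ a, N a : ℕ) : ℝ) by push_cast; ring, hN]
    field_simp
  simp [hsum1]

/-- The universal guessing distribution `P̃_n(x) = 2^{-nĤ_x}/∑_{x'} 2^{-nĤ_{x'}}`. -/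
noncomputable def univDist {X : Type*} [Fintype X] [DecidableEq X] {n : ℕ}
    (x : Fin n → X) : ℝ :=
  (2 : ℝ) ^ (-(n : ℝ) * empEnt x) / ∑ x' : Fin n → X, (2 : ℝ) ^ (-(n : ℝ) * empEnt x')

/-- The universal guessing distribution is exponentially equivalent to `2^{-nĤ_x}`:
`(n+1)^{-(|X|-1)} 2^{-nĤ_x} ≤ P̃_n(x) ≤ 2^{-nĤ_x}`. -/
lemma S_ge_one [Nonempty X] {n : ℕ} (hn : 1 ≤ n) :
    (1 : ℝ) ≤ ∑ x' : Fin n → X, (2 : ℝ) ^ (-(n : ℝ) * empEnt x') := by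
  classical
  have hk : (0:ℝ) < (Fintype.card X : ℝ) := by exact_mod_cast Fintype.card_pos
  calc (1 : ℝ) = ∑ _x' : Fin n → X, ((Fintype.card X : ℝ))⁻¹ ^ n := by
        rw [Finset.sum_const, Finset.card_univ, Fintype.card_fun, Fintype.card_fin,
          nsmul_eq_mul]
        push_cast
        rw [← mul_pow, mul_inv_cancel₀ hk.ne', one_pow]
    _ ≤ ∑ x' : Fin n → X, (2 : ℝ) ^ (-(n : ℝ) * empEnt x') := by
        refine Finset.sum_le_sum fun x' _ => ?_
        rw [two_rpow_ident hn x']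
        exact gibbs hn x'

lemma S_le [Nonempty X] {n : ℕ} (hn : 1 ≤ n) :
    ∑ x' : Fin n → X, (2 : ℝ) ^ (-(n : ℝ) * empEnt x')
      ≤ ((n : ℝ) + 1) ^ (Fintype.card X - 1) := by
  classical
  have h1 : ∑ x' : Fin n → X, (2 : ℝ) ^ (-(n : ℝ) * empEnt x')
      = ∑ N ∈ Finset.univ.image (fun x : Fin n → X => occ x),
          ∑ x' ∈ Finset.univ.filter (fun x' : Fin n → X => occ x' = N),
            ∏ a, ((N a : ℝ) / n) ^ (N a) := by
    rw [← Finset.sum_fiberwise_of_maps_to (g := fun x : Fin n → X => occ x)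
      (t := Finset.univ.image (fun x : Fin n → X => occ x))
      (fun x _ => Finset.mem_image_of_mem _ (Finset.mem_univ x))]
    refine Finset.sum_congr rfl fun N _ => Finset.sum_congr rfl fun x' hx' => ?_
    rw [two_rpow_ident hn x', (Finset.mem_filter.1 hx').2]
  rw [h1]
  calc ∑ N ∈ Finset.univ.image (fun x : Fin n → X => occ x),
          ∑ x' ∈ Finset.univ.filter (fun x' : Fin n → X => occ x' = N),
            ∏ a, ((N a : ℝ) / n) ^ (N a)
      ≤ ∑ _N ∈ Finset.univ.image (fun x : Fin n → X => occ x), (1 : ℝ) := by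
        refine Finset.sum_le_sum fun N hN => ?_
        obtain ⟨y, _, rfl⟩ := Finset.mem_image.1 hN
        exact type_sum_le_one hn _ (sum_occ y)
    _ = ((Finset.univ.image (fun x : Fin n → X => occ x)).card : ℝ) := by
        rw [Finset.sum_const, nsmul_eq_mul, mul_one]
    _ ≤ (((n + 1) ^ (Fintype.card X - 1) : ℕ) : ℝ) := by
        exact_mod_cast card_types_le n
    _ = ((n : ℝ) + 1) ^ (Fintype.card X - 1) := by push_cast; ring

theorem univDist_bounds [Nonempty X] (n : ℕ) (hn : 1 ≤ n) (x : Fin n → X) :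
    ((n : ℝ) + 1) ^ (-((Fintype.card X : ℝ) - 1)) * (2 : ℝ) ^ (-(n : ℝ) * empEnt x) ≤
        univDist x ∧
      univDist x ≤ (2 : ℝ) ^ (-(n : ℝ) * empEnt x) := by
  classical
  set T : ℝ := (2 : ℝ) ^ (-(n : ℝ) * empEnt x) with hT
  have hTpos : 0 < T := Real.rpow_pos_of_pos (by norm_num) _
  set S : ℝ := ∑ x' : Fin n → X, (2 : ℝ) ^ (-(n : ℝ) * empEnt x') with hS
  have hS1 : (1 : ℝ) ≤ S := S_ge_one hn
  have hS0 : 0 < S := lt_of_lt_of_le one_pos hS1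
  have hSM : S ≤ ((n : ℝ) + 1) ^ (Fintype.card X - 1) := S_le hn
  have hud : univDist x = T / S := rfl
  constructor
  · rw [hud]
    have hc : ((Fintype.card X : ℝ)) - 1 = ((Fintype.card X - 1 : ℕ) : ℝ) := by
      have h1 : 1 ≤ Fintype.card X := Fintype.card_pos
      push_cast [h1]
      ring
    have hM : ((n : ℝ) + 1) ^ (-((Fintype.card X : ℝ) - 1))
        = (((n : ℝ) + 1) ^ (Fintype.card X - 1 : ℕ))⁻¹ := by
      rw [hc, Real.rpow_neg (by positivity), Real.rpow_natCast]
    rw [hM]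
    rw [inv_mul_eq_div, div_le_div_iff₀ (by positivity) hS0]
    have h5 := mul_le_mul_of_nonneg_left hSM hTpos.le
    linarith [h5, mul_comm T (((n : ℝ) + 1) ^ (Fintype.card X - 1 : ℕ))]
  · rw [hud]
    exact div_le_self hTpos.le hS1
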